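/- Let f, g be bounded measurable functions with ‖f − g‖_∞ ≤ 2ε for some 0 < 2ε < 1, and let P_f, P_g be the corresponding Gaussian regression densities with noise standard deviation σ. Then the Kullback-Leibler variation satisfies V_{2,0}(P_f, P_g) ≤ 4·(1/σ² + 1/(4σ⁴))·ε², where V_{2,0}(P,Q) = ∫ P·(log(P/Q) − KL(P,Q))². -/

import Mathlib

open MeasureTheory Real Filter Topology

/-- The density of a univariate Gaussian with mean `m` and standard deviation `σ`. -/
noncomputable def gaussDensity (m σ y : ℝ) : ℝ :=
  (σ * Real.sqrt (2 * π))⁻¹ * Real.exp (-(y - m) ^ 2 / (2 * σ ^ 2))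

lemma tendsto_exp_neg_sq_atTop {b : ℝ} (hb : 0 < b) :
    Tendsto (fun x : ℝ => exp (-b * x ^ 2)) atTop (𝓝 0) := by
  have h := exp_neg_mul_sq_isLittleO_exp_neg hb
  have h2 : Tendsto (fun x : ℝ => exp (-x)) atTop (𝓝 0) :=
    Real.tendsto_exp_atBot.comp tendsto_neg_atTop_atBot
  exact h.isBigO.trans_tendsto h2

lemma tendsto_mul_exp_neg_sq_atTop {b : ℝ} (hb : 0 < b) :
    Tendsto (fun x : ℝ => x * exp (-b * x ^ 2)) atTop (𝓝 0) := by
  have h := rpow_mul_exp_neg_mul_sq_isLittleO_exp_neg hb 1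
  have hlin : Tendsto (fun x : ℝ => -(1/2) * x) atTop atBot :=
    Tendsto.const_mul_atTop_of_neg (by norm_num) tendsto_id
  have h2 : Tendsto (fun x : ℝ => exp (-(1/2) * x)) atTop (𝓝 0) :=
    Real.tendsto_exp_atBot.comp hlin
  have h3 := h.isBigO.trans_tendsto h2
  refine h3.congr' ?_
  filter_upwards [eventually_ge_atTop (0:ℝ)] with x hx
  rw [Real.rpow_one]

lemma tendsto_exp_neg_sq_atBot {b : ℝ} (hb : 0 < b) :
    Tendsto (fun x : ℝ => exp (-b * x ^ 2)) atBot (𝓝 0) := by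
  have h := (tendsto_exp_neg_sq_atTop hb).comp tendsto_neg_atBot_atTop
  simpa [Function.comp_def] using h

lemma tendsto_mul_exp_neg_sq_atBot {b : ℝ} (hb : 0 < b) :
    Tendsto (fun x : ℝ => x * exp (-b * x ^ 2)) atBot (𝓝 0) := by
  have h := (tendsto_mul_exp_neg_sq_atTop hb).comp tendsto_neg_atBot_atTop
  have h2 : Tendsto (fun x : ℝ => -(x * exp (-b * x ^ 2))) atBot (𝓝 0) := by
    simpa [Function.comp_def, neg_mul] using h
  simpa using h2.neg

lemma integrable_sq_mul_exp_neg_sq {b : ℝ} (hb : 0 < b) :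
    Integrable (fun x : ℝ => x ^ 2 * exp (-b * x ^ 2)) := by
  have h := integrable_rpow_mul_exp_neg_mul_sq hb (s := 2) (by norm_num)
  have : ∀ x : ℝ, x ^ (2:ℝ) = x ^ 2 := fun x => by
    rw [show (2:ℝ) = ((2:ℕ):ℝ) by norm_num, Real.rpow_natCast]
  simpa [this] using h

lemma integral_mul_exp_neg_sq {b : ℝ} (hb : 0 < b) :
    ∫ x : ℝ, x * exp (-b * x ^ 2) = 0 := by
  have hderiv : ∀ x : ℝ, HasDerivAt (fun x : ℝ => exp (-b * x ^ 2) * (-(2*b))⁻¹)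
      (x * exp (-b * x ^ 2)) x := by
    intro x
    have h1 : HasDerivAt (fun x : ℝ => -b * x ^ 2) (-b * (2 * x)) x := by
      simpa using ((hasDerivAt_pow 2 x).const_mul (-b))
    have h2 := (h1.exp).mul_const (-(2*b))⁻¹
    refine h2.congr_deriv ?_
    field_simp [hb.ne']
  have := integral_of_hasDerivAt_of_tendsto hderiv (integrable_mul_exp_neg_mul_sq hb)
    (((tendsto_exp_neg_sq_atBot hb).mul_const _))
    (((tendsto_exp_neg_sq_atTop hb).mul_const _))
  simpa using this

lemma integral_sq_mul_exp_neg_sq {b : ℝ} (hb : 0 < b) :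
    ∫ x : ℝ, x ^ 2 * exp (-b * x ^ 2) = Real.sqrt (π / b) / (2 * b) := by
  have hderiv : ∀ x : ℝ, HasDerivAt (fun x : ℝ => x * exp (-b * x ^ 2) * (-(2*b))⁻¹)
      (x ^ 2 * exp (-b * x ^ 2) - exp (-b * x ^ 2) * (2*b)⁻¹) x := by
    intro x
    have h1 : HasDerivAt (fun x : ℝ => -b * x ^ 2) (-b * (2 * x)) x := by
      simpa using ((hasDerivAt_pow 2 x).const_mul (-b))
    have h2 := ((hasDerivAt_id x).mul h1.exp).mul_const (-(2*b))⁻¹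
    refine h2.congr_deriv ?_
    simp only [id]
    field_simp [hb.ne']
    ring
  have hint : Integrable (fun x : ℝ =>
      x ^ 2 * exp (-b * x ^ 2) - exp (-b * x ^ 2) * (2*b)⁻¹) :=
    (integrable_sq_mul_exp_neg_sq hb).sub ((integrable_exp_neg_mul_sq hb).mul_const _)
  have hzero := integral_of_hasDerivAt_of_tendsto hderiv hint
    ((tendsto_mul_exp_neg_sq_atBot hb).mul_const _)
    ((tendsto_mul_exp_neg_sq_atTop hb).mul_const _)
  simp only [zero_mul, sub_zero] at hzero
  have hsub := integral_sub (integrable_sq_mul_exp_neg_sq hb)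
    ((integrable_exp_neg_mul_sq hb).mul_const (2*b)⁻¹)
  rw [hsub] at hzero
  rw [integral_mul_const, integral_gaussian] at hzero
  have : ∫ x : ℝ, x ^ 2 * exp (-b * x ^ 2) = Real.sqrt (π / b) * (2*b)⁻¹ := by linarith
  rw [this]; ring

section GD


lemma gaussDensity_eq (m σ y : ℝ) :
    gaussDensity m σ y = (σ * Real.sqrt (2 * π))⁻¹ * exp (-(2 * σ ^ 2)⁻¹ * (y - m) ^ 2) := by
  rw [gaussDensity]
  ring_nf

lemma gaussDensity_pos {σ : ℝ} (hσ : 0 < σ) (m y : ℝ) : 0 < gaussDensity m σ y := by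
  rw [gaussDensity]
  have h2 : 0 < Real.sqrt (2 * π) := Real.sqrt_pos.mpr (by positivity)
  positivity

lemma norm_const : (0:ℝ) < (2 * (1:ℝ)^2)⁻¹ := by positivity

variable {σ : ℝ} (hσ : 0 < σ) (m : ℝ)

lemma sqrt_pi_div (hσ : 0 < σ) : Real.sqrt (π / (2 * σ ^ 2)⁻¹) = Real.sqrt (2 * π) * σ := by
  have : π / (2 * σ ^ 2)⁻¹ = (2 * π) * σ ^ 2 := by
    field_simp
  rw [this, Real.sqrt_mul (by positivity), Real.sqrt_sq hσ.le]

include hσ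

lemma integrable_gaussDensity : Integrable (gaussDensity m σ) := by
  have hb : 0 < (2 * σ ^ 2)⁻¹ := by positivity
  have h := ((integrable_exp_neg_mul_sq hb).comp_sub_right m).const_mul (σ * Real.sqrt (2 * π))⁻¹
  refine h.congr (ae_of_all _ fun y => ?_)
  simp only [gaussDensity_eq]

lemma integral_gaussDensity : ∫ y, gaussDensity m σ y = 1 := by
  have hb : 0 < (2 * σ ^ 2)⁻¹ := by positivity
  simp_rw [gaussDensity_eq]
  rw [integral_const_mul, integral_sub_right_eq_self (fun y => exp (-(2 * σ ^ 2)⁻¹ * y ^ 2)) m,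
    integral_gaussian, sqrt_pi_div hσ]
  rw [mul_comm σ]
  field_simp

lemma integrable_gaussDensity_lin :
    Integrable (fun y => gaussDensity m σ y * (y - m)) := by
  have hb : 0 < (2 * σ ^ 2)⁻¹ := by positivity
  have h := (((integrable_mul_exp_neg_mul_sq hb).comp_sub_right m).const_mul
    (σ * Real.sqrt (2 * π))⁻¹)
  refine h.congr (ae_of_all _ fun y => ?_)
  simp only [gaussDensity_eq]; ring

lemma integral_gaussDensity_lin : ∫ y, gaussDensity m σ y * (y - m) = 0 := by
  have hb : 0 < (2 * σ ^ 2)⁻¹ := by positivity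
  have : (fun y => gaussDensity m σ y * (y - m)) =
      fun y => (σ * Real.sqrt (2 * π))⁻¹ * ((fun z => z * exp (-(2 * σ ^ 2)⁻¹ * z ^ 2)) (y - m)) := by
    funext y; simp only [gaussDensity_eq]; ring
  rw [this, integral_const_mul,
    integral_sub_right_eq_self (fun z => z * exp (-(2 * σ ^ 2)⁻¹ * z ^ 2)) m,
    integral_mul_exp_neg_sq hb, mul_zero]

lemma integrable_gaussDensity_sq :
    Integrable (fun y => gaussDensity m σ y * (y - m) ^ 2) := by
  have hb : 0 < (2 * σ ^ 2)⁻¹ := by positivity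
  have h := (((integrable_sq_mul_exp_neg_sq hb).comp_sub_right m).const_mul
    (σ * Real.sqrt (2 * π))⁻¹)
  refine h.congr (ae_of_all _ fun y => ?_)
  simp only [gaussDensity_eq]; ring

lemma integral_gaussDensity_sq : ∫ y, gaussDensity m σ y * (y - m) ^ 2 = σ ^ 2 := by
  have hb : 0 < (2 * σ ^ 2)⁻¹ := by positivity
  have : (fun y => gaussDensity m σ y * (y - m) ^ 2) =
      fun y => (σ * Real.sqrt (2 * π))⁻¹ *
        ((fun z => z ^ 2 * exp (-(2 * σ ^ 2)⁻¹ * z ^ 2)) (y - m)) := by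
    funext y; simp only [gaussDensity_eq]; ring
  rw [this, integral_const_mul,
    integral_sub_right_eq_self (fun z => z ^ 2 * exp (-(2 * σ ^ 2)⁻¹ * z ^ 2)) m,
    integral_sq_mul_exp_neg_sq hb, sqrt_pi_div hσ]
  have h2 : Real.sqrt (2 * π) > 0 := Real.sqrt_pos.mpr (by positivity)
  field_simp
variable (α β : ℝ)

lemma integrable_gd_affine :
    Integrable (fun y => gaussDensity m σ y * (α * (y - m) + β)) := by
  have h : Integrable (fun y => α * (gaussDensity m σ y * (y - m)) + gaussDensity m σ y * β)
      volume :=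
    ((integrable_gaussDensity_lin hσ m).const_mul α).add
      ((integrable_gaussDensity hσ m).mul_const β)
  refine h.congr (ae_of_all _ fun y => ?_)
  ring

lemma integral_gd_affine :
    ∫ y, gaussDensity m σ y * (α * (y - m) + β) = β := by
  have : (fun y => gaussDensity m σ y * (α * (y - m) + β)) =
      fun y => α * (gaussDensity m σ y * (y - m)) + gaussDensity m σ y * β := by
    funext y; ring
  rw [this, integral_add (((integrable_gaussDensity_lin hσ m).const_mul α))
    ((integrable_gaussDensity hσ m).mul_const β), integral_const_mul, integral_mul_const,
    integral_gaussDensity_lin hσ m, integral_gaussDensity hσ m]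
  ring

lemma integrable_gd_affine_sq :
    Integrable (fun y => gaussDensity m σ y * (α * (y - m) + β) ^ 2) := by
  have hA := (integrable_gaussDensity_sq hσ m).const_mul (α^2)
  have hB := (integrable_gaussDensity_lin hσ m).const_mul (2*α*β)
  have hC := (integrable_gaussDensity hσ m).mul_const (β^2)
  have h : Integrable (fun y => (α^2 * (gaussDensity m σ y * (y - m)^2) +
      2*α*β * (gaussDensity m σ y * (y - m))) + gaussDensity m σ y * β^2) volume :=
    (hA.add hB).add hC
  refine h.congr (ae_of_all _ fun y => ?_)
  ring

lemma integral_gd_affine_sq :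
    ∫ y, gaussDensity m σ y * (α * (y - m) + β) ^ 2 = α ^ 2 * σ ^ 2 + β ^ 2 := by
  have hA := (integrable_gaussDensity_sq hσ m).const_mul (α^2)
  have hB := (integrable_gaussDensity_lin hσ m).const_mul (2*α*β)
  have hC := (integrable_gaussDensity hσ m).mul_const (β^2)
  have hAB : Integrable (fun y => α^2 * (gaussDensity m σ y * (y - m)^2) +
      2*α*β * (gaussDensity m σ y * (y - m))) volume := hA.add hB
  have : (fun y => gaussDensity m σ y * (α * (y - m) + β) ^ 2) =
      fun y => (α^2 * (gaussDensity m σ y * (y - m)^2) +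
        2*α*β * (gaussDensity m σ y * (y - m))) + gaussDensity m σ y * β^2 := by
    funext y; ring
  rw [this, integral_add hAB hC, integral_add hA hB,
    integral_const_mul, integral_const_mul, integral_mul_const,
    integral_gaussDensity_sq hσ m, integral_gaussDensity_lin hσ m, integral_gaussDensity hσ m]
  ring

lemma integral_abs_gd_affine_le :
    ∫ y, |gaussDensity m σ y * (α * (y - m) + β)| ≤ (1 + (α ^ 2 * σ ^ 2 + β ^ 2)) / 2 := by
  have hint1 := (integrable_gd_affine hσ m α β).abs
  have hint2 : Integrable (fun y => (gaussDensity m σ y +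
      gaussDensity m σ y * (α * (y - m) + β) ^ 2) / 2) volume :=
    ((integrable_gaussDensity hσ m).add (integrable_gd_affine_sq hσ m α β)).div_const 2
  have hmono : ∀ y, |gaussDensity m σ y * (α * (y - m) + β)| ≤
      (gaussDensity m σ y + gaussDensity m σ y * (α * (y - m) + β) ^ 2) / 2 := by
    intro y
    have hgd := (gaussDensity_pos hσ m y).le
    rw [abs_mul, abs_of_nonneg hgd]
    have h1 : |α * (y - m) + β| ≤ (1 + (α * (y - m) + β) ^ 2) / 2 := by
      nlinarith [sq_nonneg (|α * (y - m) + β| - 1), sq_abs (α * (y - m) + β)]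
    nlinarith [mul_le_mul_of_nonneg_left h1 hgd]
  calc ∫ y, |gaussDensity m σ y * (α * (y - m) + β)|
      ≤ ∫ y, (gaussDensity m σ y + gaussDensity m σ y * (α * (y - m) + β) ^ 2) / 2 :=
        integral_mono hint1 hint2 hmono
    _ = (1 + (α ^ 2 * σ ^ 2 + β ^ 2)) / 2 := by
        rw [integral_div, integral_add (integrable_gaussDensity hσ m)
          (integrable_gd_affine_sq hσ m α β), integral_gaussDensity hσ m,
          integral_gd_affine_sq hσ m α β]
end GD

lemma log_gaussDensity_ratio {σ : ℝ} (hσ : 0 < σ) (fx gx y : ℝ) :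
    Real.log (gaussDensity fx σ y / gaussDensity gx σ y) =
      (fx - gx) / σ ^ 2 * (y - fx) + (fx - gx) ^ 2 / (2 * σ ^ 2) := by
  have h2 : (0:ℝ) < Real.sqrt (2 * π) := Real.sqrt_pos.mpr (by positivity)
  have hc : σ * Real.sqrt (2 * π) ≠ 0 := (mul_pos hσ h2).ne'
  rw [Real.log_div (gaussDensity_pos hσ fx y).ne' (gaussDensity_pos hσ gx y).ne',
    gaussDensity, gaussDensity, Real.log_mul (inv_ne_zero hc) (Real.exp_ne_zero _),
    Real.log_mul (inv_ne_zero hc) (Real.exp_ne_zero _), Real.log_exp, Real.log_exp]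
  have hσ2 : σ ^ 2 ≠ 0 := by positivity
  field_simp
  ring

section ProdLemmas

variable {X : Type*} [MeasurableSpace X] (μ : Measure X) [SigmaFinite μ]
variable (G f α β : X → ℝ) (σ Cα Cβ : ℝ)

lemma meas_gd_kernel (hf : Measurable f) :
    Measurable fun p : X × ℝ => gaussDensity (f p.1) σ p.2 := by
  have h1 : Measurable fun p : X × ℝ => p.2 - f p.1 :=
    measurable_snd.sub (hf.comp measurable_fst)
  unfold gaussDensity
  exact ((((h1.pow_const 2).neg).div_const (2 * σ ^ 2)).exp).const_mul _

variable (hσ : 0 < σ) (hG : Measurable G) (hGnn : ∀ x, 0 ≤ G x) (hG_int : Integrable G μ)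
  (hf : Measurable f) (hα : Measurable α) (hβ : Measurable β)
  (hCα : ∀ x, |α x| ≤ Cα) (hCβ : ∀ x, |β x| ≤ Cβ)

include hσ hGnn hG_int hf hCα hCβ in
lemma integrable_prod_affine (hmeas : Measurable fun p : X × ℝ =>
      G p.1 * (gaussDensity (f p.1) σ p.2 * (α p.1 * (p.2 - f p.1) + β p.1))) :
    Integrable (fun p : X × ℝ =>
      G p.1 * (gaussDensity (f p.1) σ p.2 * (α p.1 * (p.2 - f p.1) + β p.1)))
      (μ.prod volume) := by
  rw [integrable_prod_iff hmeas.aestronglyMeasurable]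
  have hCα2 : ∀ x, α x ^ 2 ≤ Cα ^ 2 := fun x => by
    rw [← sq_abs]; exact pow_le_pow_left₀ (abs_nonneg _) (hCα x) 2
  have hCβ2 : ∀ x, β x ^ 2 ≤ Cβ ^ 2 := fun x => by
    rw [← sq_abs]; exact pow_le_pow_left₀ (abs_nonneg _) (hCβ x) 2
  constructor
  · exact ae_of_all _ fun x => by simpa using (integrable_gd_affine hσ (f x) (α x) (β x)).const_mul (G x)
  · refine Integrable.mono' (hG_int.mul_const ((1 + (Cα ^ 2 * σ ^ 2 + Cβ ^ 2)) / 2))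
      hmeas.aestronglyMeasurable.norm.integral_prod_right' (ae_of_all _ fun x => ?_)
    rw [Real.norm_eq_abs, abs_of_nonneg (integral_nonneg fun y => norm_nonneg _)]
    have heq : ∀ y : ℝ, ‖G x * (gaussDensity (f x) σ y * (α x * (y - f x) + β x))‖ =
        G x * |gaussDensity (f x) σ y * (α x * (y - f x) + β x)| := fun y => by
      rw [Real.norm_eq_abs, abs_mul, abs_of_nonneg (hGnn x)]
    calc (∫ y, ‖G x * (gaussDensity (f x) σ y * (α x * (y - f x) + β x))‖)
        = G x * ∫ y, |gaussDensity (f x) σ y * (α x * (y - f x) + β x)| := by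
          simp_rw [heq]; rw [integral_const_mul]
      _ ≤ G x * ((1 + (Cα ^ 2 * σ ^ 2 + Cβ ^ 2)) / 2) := by
          refine mul_le_mul_of_nonneg_left ?_ (hGnn x)
          refine (integral_abs_gd_affine_le hσ (f x) (α x) (β x)).trans ?_
          have h1 := hCα2 x; have h2 := hCβ2 x
          have hσ2 : (0:ℝ) ≤ σ ^ 2 := sq_nonneg σ
          nlinarith

include hσ hGnn hG_int hf hCα hCβ in
lemma integral_prod_affine (hmeas : Measurable fun p : X × ℝ =>
      G p.1 * (gaussDensity (f p.1) σ p.2 * (α p.1 * (p.2 - f p.1) + β p.1))) :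
    ∫ p : X × ℝ, G p.1 * (gaussDensity (f p.1) σ p.2 * (α p.1 * (p.2 - f p.1) + β p.1))
      ∂(μ.prod volume) = ∫ x, G x * β x ∂μ := by
  rw [integral_prod _ (integrable_prod_affine μ G f α β σ Cα Cβ hσ hGnn hG_int hf hCα hCβ hmeas)]
  refine integral_congr_ae (ae_of_all _ fun x => ?_)
  show (∫ y, G x * (gaussDensity (f x) σ y * (α x * (y - f x) + β x))) = G x * β x
  rw [integral_const_mul, integral_gd_affine hσ (f x) (α x) (β x)]

include hσ hGnn hG_int hf hCα hCβ in
lemma integrable_prod_affine_sq (hmeas : Measurable fun p : X × ℝ =>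
      G p.1 * (gaussDensity (f p.1) σ p.2 * (α p.1 * (p.2 - f p.1) + β p.1) ^ 2)) :
    Integrable (fun p : X × ℝ =>
      G p.1 * (gaussDensity (f p.1) σ p.2 * (α p.1 * (p.2 - f p.1) + β p.1) ^ 2))
      (μ.prod volume) := by
  rw [integrable_prod_iff hmeas.aestronglyMeasurable]
  have hCα2 : ∀ x, α x ^ 2 ≤ Cα ^ 2 := fun x => by
    rw [← sq_abs]; exact pow_le_pow_left₀ (abs_nonneg _) (hCα x) 2
  have hCβ2 : ∀ x, β x ^ 2 ≤ Cβ ^ 2 := fun x => by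
    rw [← sq_abs]; exact pow_le_pow_left₀ (abs_nonneg _) (hCβ x) 2
  constructor
  · exact ae_of_all _ fun x => by simpa using (integrable_gd_affine_sq hσ (f x) (α x) (β x)).const_mul (G x)
  · refine Integrable.mono' (hG_int.mul_const (Cα ^ 2 * σ ^ 2 + Cβ ^ 2))
      hmeas.aestronglyMeasurable.norm.integral_prod_right' (ae_of_all _ fun x => ?_)
    rw [Real.norm_eq_abs, abs_of_nonneg (integral_nonneg fun y => norm_nonneg _)]
    have heq : ∀ y : ℝ, ‖G x * (gaussDensity (f x) σ y * (α x * (y - f x) + β x) ^ 2)‖ =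
        G x * (gaussDensity (f x) σ y * (α x * (y - f x) + β x) ^ 2) := fun y => by
      rw [Real.norm_eq_abs, abs_of_nonneg (mul_nonneg (hGnn x)
        (mul_nonneg (gaussDensity_pos hσ (f x) y).le (sq_nonneg _)))]
    calc (∫ y, ‖G x * (gaussDensity (f x) σ y * (α x * (y - f x) + β x) ^ 2)‖)
        = G x * ∫ y, gaussDensity (f x) σ y * (α x * (y - f x) + β x) ^ 2 := by
          simp_rw [heq]; rw [integral_const_mul]
      _ = G x * (α x ^ 2 * σ ^ 2 + β x ^ 2) := by
          rw [integral_gd_affine_sq hσ (f x) (α x) (β x)]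
      _ ≤ G x * (Cα ^ 2 * σ ^ 2 + Cβ ^ 2) := by
          refine mul_le_mul_of_nonneg_left ?_ (hGnn x)
          have h1 := hCα2 x; have h2 := hCβ2 x
          have hσ2 : (0:ℝ) ≤ σ ^ 2 := sq_nonneg σ
          nlinarith

include hσ hGnn hG_int hf hCα hCβ in
lemma integral_prod_affine_sq (hmeas : Measurable fun p : X × ℝ =>
      G p.1 * (gaussDensity (f p.1) σ p.2 * (α p.1 * (p.2 - f p.1) + β p.1) ^ 2)) :
    ∫ p : X × ℝ, G p.1 * (gaussDensity (f p.1) σ p.2 * (α p.1 * (p.2 - f p.1) + β p.1) ^ 2)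
      ∂(μ.prod volume) = ∫ x, G x * (α x ^ 2 * σ ^ 2 + β x ^ 2) ∂μ := by
  rw [integral_prod _ (integrable_prod_affine_sq μ G f α β σ Cα Cβ hσ hGnn hG_int hf hCα hCβ hmeas)]
  refine integral_congr_ae (ae_of_all _ fun x => ?_)
  show (∫ y, G x * (gaussDensity (f x) σ y * (α x * (y - f x) + β x) ^ 2))
      = G x * (α x ^ 2 * σ ^ 2 + β x ^ 2)
  rw [integral_const_mul, integral_gd_affine_sq hσ (f x) (α x) (β x)]

end ProdLemmas

/-- if `‖f − g‖_∞ ≤ 2ε` with `0 < 2ε < 1`, then for the Gaussian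
regression densities `P_f, P_g` with noise standard deviation `σ`, the Kullback-Leibler
variation satisfies `V_{2,0}(P_f, P_g) ≤ 4·(1/σ² + 1/(4σ⁴))·ε²`, where
`V_{2,0}(P,Q) = ∫ P·(log(P/Q) − KL(P,Q))²`. -/
theorem kl_variation_bound
    {X : Type*} [MeasurableSpace X] (μ : Measure X) [SigmaFinite μ]
    (G f g : X → ℝ) (σ ε : ℝ) (hσ : 0 < σ) (hε : 0 < ε) (hε1 : 2 * ε < 1)
    (hG : Measurable G) (hGnn : ∀ x, 0 ≤ G x) (hGint : ∫ x, G x ∂μ = 1)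
    (hf : Measurable f) (hg : Measurable g)
    (hfg : ∀ x, |f x - g x| ≤ 2 * ε) :
    (∫ p : X × ℝ,
        (G p.1 * gaussDensity (f p.1) σ p.2) *
          (Real.log ((G p.1 * gaussDensity (f p.1) σ p.2) /
              (G p.1 * gaussDensity (g p.1) σ p.2)) -
            ∫ p' : X × ℝ,
              (G p'.1 * gaussDensity (f p'.1) σ p'.2) *
                Real.log ((G p'.1 * gaussDensity (f p'.1) σ p'.2) /
                  (G p'.1 * gaussDensity (g p'.1) σ p'.2)) ∂(μ.prod volume)) ^ 2
        ∂(μ.prod volume))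
      ≤ 4 * (1 / σ ^ 2 + 1 / (4 * σ ^ 4)) * ε ^ 2 := by
  have hσ2 : (0:ℝ) < σ ^ 2 := by positivity
  have hσ4 : (0:ℝ) < σ ^ 4 := by positivity
  have hG_int : Integrable G μ := by
    by_contra h
    rw [integral_undef h] at hGint
    norm_num at hGint
  -- abbreviations
  set a : X → ℝ := fun x => (f x - g x) / σ ^ 2 with ha
  set bq : X → ℝ := fun x => (f x - g x) ^ 2 / (2 * σ ^ 2) with hbq
  have ha_meas : Measurable a := (hf.sub hg).div_const _
  have hbq_meas : Measurable bq := ((hf.sub hg).pow_const 2).div_const _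
  have hd2 : ∀ x, (f x - g x) ^ 2 ≤ 4 * ε ^ 2 := by
    intro x
    have := hfg x
    nlinarith [abs_nonneg (f x - g x), sq_abs (f x - g x)]
  have ha_bd : ∀ x, |a x| ≤ 2 * ε / σ ^ 2 := by
    intro x
    rw [ha]
    rw [abs_div, abs_of_pos hσ2]
    gcongr
    exact hfg x
  have hbq_nonneg : ∀ x, 0 ≤ bq x := fun x => by positivity
  have hbq_bd : ∀ x, bq x ≤ 2 * ε ^ 2 / σ ^ 2 := by
    intro x
    rw [hbq]
    rw [div_le_div_iff₀ (by positivity) hσ2]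
    nlinarith [hd2 x]
  -- pointwise identity for the log term
  have hpt1 : ∀ p : X × ℝ,
      (G p.1 * gaussDensity (f p.1) σ p.2) *
        Real.log ((G p.1 * gaussDensity (f p.1) σ p.2) /
          (G p.1 * gaussDensity (g p.1) σ p.2)) =
      G p.1 * (gaussDensity (f p.1) σ p.2 * (a p.1 * (p.2 - f p.1) + bq p.1)) := by
    intro p
    rcases (hGnn p.1).eq_or_lt with hz | hpos
    · rw [← hz]; ring
    · rw [mul_div_mul_left _ _ hpos.ne', log_gaussDensity_ratio hσ (f p.1) (g p.1) p.2]
      ring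
  -- measurability of kernels
  have hmeasK : Measurable fun p : X × ℝ =>
      G p.1 * (gaussDensity (f p.1) σ p.2 * (a p.1 * (p.2 - f p.1) + bq p.1)) := by
    have h1 : Measurable fun p : X × ℝ => p.2 - f p.1 :=
      measurable_snd.sub (hf.comp measurable_fst)
    exact (hG.comp measurable_fst).mul ((meas_gd_kernel f σ hf).mul
      (((ha_meas.comp measurable_fst).mul h1).add (hbq_meas.comp measurable_fst)))
  -- the KL term
  have hK : (∫ p' : X × ℝ,
      (G p'.1 * gaussDensity (f p'.1) σ p'.2) *
        Real.log ((G p'.1 * gaussDensity (f p'.1) σ p'.2) /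
          (G p'.1 * gaussDensity (g p'.1) σ p'.2)) ∂(μ.prod volume)) =
      ∫ x, G x * bq x ∂μ := by
    rw [integral_congr_ae (ae_of_all _ hpt1)]
    exact integral_prod_affine μ G f a bq σ (2 * ε / σ ^ 2) (2 * ε ^ 2 / σ ^ 2) hσ hGnn hG_int hf
      ha_bd (fun x => abs_of_nonneg (hbq_nonneg x) ▸ hbq_bd x) hmeasK
  set K : ℝ := ∫ x, G x * bq x ∂μ with hKdef
  have hGbq_int : Integrable (fun x => G x * bq x) μ := by
    refine Integrable.mono' (hG_int.mul_const (2 * ε ^ 2 / σ ^ 2))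
      (hG.mul hbq_meas).aestronglyMeasurable (ae_of_all _ fun x => ?_)
    rw [Real.norm_eq_abs, abs_of_nonneg (mul_nonneg (hGnn x) (hbq_nonneg x))]
    exact mul_le_mul_of_nonneg_left (hbq_bd x) (hGnn x)
  have hK0 : 0 ≤ K := integral_nonneg fun x => mul_nonneg (hGnn x) (hbq_nonneg x)
  have hK1 : K ≤ 2 * ε ^ 2 / σ ^ 2 := by
    have := integral_mono hGbq_int (hG_int.mul_const (2 * ε ^ 2 / σ ^ 2))
      (fun x => mul_le_mul_of_nonneg_left (hbq_bd x) (hGnn x))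
    rwa [integral_mul_const, hGint, one_mul] at this
  have hβ_bd : ∀ x, |bq x - K| ≤ 2 * ε ^ 2 / σ ^ 2 := by
    intro x
    rw [abs_le]
    constructor <;> [linarith [hbq_nonneg x]; linarith [hbq_bd x]]
  -- rewrite the main integrand
  have hpt2 : ∀ p : X × ℝ,
      (G p.1 * gaussDensity (f p.1) σ p.2) *
        (Real.log ((G p.1 * gaussDensity (f p.1) σ p.2) /
          (G p.1 * gaussDensity (g p.1) σ p.2)) - K) ^ 2 =
      G p.1 * (gaussDensity (f p.1) σ p.2 * (a p.1 * (p.2 - f p.1) + (bq p.1 - K)) ^ 2) := by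
    intro p
    rcases (hGnn p.1).eq_or_lt with hz | hpos
    · rw [← hz]; ring
    · rw [mul_div_mul_left _ _ hpos.ne', log_gaussDensity_ratio hσ (f p.1) (g p.1) p.2]
      ring
  have hmeasSq : Measurable fun p : X × ℝ =>
      G p.1 * (gaussDensity (f p.1) σ p.2 *
        (a p.1 * (p.2 - f p.1) + ((fun x => bq x - K) p.1)) ^ 2) := by
    have h1 : Measurable fun p : X × ℝ => p.2 - f p.1 :=
      measurable_snd.sub (hf.comp measurable_fst)
    exact (hG.comp measurable_fst).mul ((meas_gd_kernel f σ hf).mul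
      ((((ha_meas.comp measurable_fst).mul h1).add
        (((hbq_meas.sub measurable_const).comp measurable_fst))).pow_const 2))
  rw [hK]
  rw [integral_congr_ae (ae_of_all _ hpt2)]
  rw [show (fun p : X × ℝ =>
      G p.1 * (gaussDensity (f p.1) σ p.2 * (a p.1 * (p.2 - f p.1) + (bq p.1 - K)) ^ 2)) =
      fun p : X × ℝ =>
      G p.1 * (gaussDensity (f p.1) σ p.2 *
        (a p.1 * (p.2 - f p.1) + ((fun x => bq x - K) p.1)) ^ 2) from rfl]
  rw [integral_prod_affine_sq μ G f a (fun x => bq x - K) σ (2 * ε / σ ^ 2) (2 * ε ^ 2 / σ ^ 2)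
    hσ hGnn hG_int hf ha_bd hβ_bd hmeasSq]
  -- final bound
  have hC : ∀ x, G x * (a x ^ 2 * σ ^ 2 + (bq x - K) ^ 2) ≤
      G x * (4 * ε ^ 2 / σ ^ 2 + ε ^ 2 / σ ^ 4) := by
    intro x
    refine mul_le_mul_of_nonneg_left ?_ (hGnn x)
    have h1 : a x ^ 2 * σ ^ 2 ≤ 4 * ε ^ 2 / σ ^ 2 := by
      rw [ha]
      rw [div_pow, div_mul_eq_mul_div, div_le_div_iff₀ (by positivity) hσ2]
      have := hd2 x
      nlinarith [sq_nonneg σ]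
    have h2 : (bq x - K) ^ 2 ≤ ε ^ 2 / σ ^ 4 := by
      have hb := hβ_bd x
      have h3 : (bq x - K) ^ 2 ≤ (2 * ε ^ 2 / σ ^ 2) ^ 2 := by
        rw [← sq_abs]
        exact pow_le_pow_left₀ (abs_nonneg _) hb 2
      have h4 : (2 * ε ^ 2 / σ ^ 2) ^ 2 ≤ ε ^ 2 / σ ^ 4 := by
        rw [div_pow, div_le_div_iff₀ (by positivity) hσ4]
        have hε2 : 4 * ε ^ 2 ≤ 1 := by nlinarith
        have : (σ ^ 2) ^ 2 = σ ^ 4 := by ring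
        nlinarith [mul_le_mul_of_nonneg_right hε2 (mul_nonneg (sq_nonneg ε) hσ4.le)]
      linarith
    linarith
  have hint1 : Integrable (fun x => G x * (a x ^ 2 * σ ^ 2 + (bq x - K) ^ 2)) μ := by
    refine Integrable.mono' (hG_int.mul_const (4 * ε ^ 2 / σ ^ 2 + ε ^ 2 / σ ^ 4))
      (hG.mul (((ha_meas.pow_const 2).mul_const _).add
        ((hbq_meas.sub measurable_const).pow_const 2))).aestronglyMeasurable
      (ae_of_all _ fun x => ?_)
    rw [Real.norm_eq_abs, abs_of_nonneg (mul_nonneg (hGnn x)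
      (add_nonneg (mul_nonneg (sq_nonneg _) hσ2.le) (sq_nonneg _)))]
    exact hC x
  have hfinal := integral_mono hint1
    (hG_int.mul_const (4 * ε ^ 2 / σ ^ 2 + ε ^ 2 / σ ^ 4)) hC
  rw [integral_mul_const, hGint, one_mul] at hfinal
  refine hfinal.trans_eq ?_
  field_simp
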